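/- Let n ≥ 5 and let A be the n×n clamped-clamped beam matrix. Let T ∈ ℝ^{n×n} be the tridiagonal Toeplitz matrix with 2 on the diagonal and −1 on the first sub- and superdiagonals, and let U ∈ ℝ^{n×2} be the matrix whose first column is √2·e₁ and whose second column is √2·e_n (where e₁, e_n are the first and last standard basis vectors). Then A = T² + U Uᵗ. -/
import Mathlib

open scoped ENNReal
open Matrix

/-- The `n × n` clamped-clamped beam matrix (1-based index `i' = i+1`). -/
def A_CC (n : ℕ) : Matrix (Fin n) (Fin n) ℝ :=
  Matrix.of fun i j =>
    let i' := (i : ℕ) + 1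
    let j' := (j : ℕ) + 1
    if i' = j' then (if i' = 1 ∨ i' = n then 7 else 6)
    else if j' = i' + 1 ∨ i' = j' + 1 then -4
    else if j' = i' + 2 ∨ i' = j' + 2 then 1
    else 0

/-- The `n × n` tridiagonal Toeplitz matrix `tridiag(-1, 2, -1)`. -/
def Tmat (n : ℕ) : Matrix (Fin n) (Fin n) ℝ :=
  Matrix.of fun i j =>
    if (i : ℕ) = (j : ℕ) then 2
    else if (j : ℕ) = (i : ℕ) + 1 ∨ (i : ℕ) = (j : ℕ) + 1 then -1
    else 0

/-- The `n × 2` matrix whose columns are `√2·e₁` and `√2·eₙ`. -/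
noncomputable def Umat (n : ℕ) : Matrix (Fin n) (Fin 2) ℝ :=
  Matrix.of fun i k =>
    if k = 0 then (if (i : ℕ) = 0 then Real.sqrt 2 else 0)
    else (if (i : ℕ) = n - 1 then Real.sqrt 2 else 0)


def tN (a b : ℕ) : ℝ :=
  if a = b then 2
  else if b = a + 1 ∨ a = b + 1 then -1
  else 0

lemma sum_two {g : ℕ → ℝ} {n a b : ℕ} (hab : a < b) (hb : b < n)
    (h : ∀ k < n, k ≠ a → k ≠ b → g k = 0) :
    ∑ k ∈ Finset.range n, g k = g a + g b := by
  rw [← Finset.sum_subset (s₁ := ({a, b} : Finset ℕ))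
      (by intro x hx; simp at hx; rcases hx with h | h <;> simp [Finset.mem_range] <;> omega)
      (by intro x hx hx'; simp [Finset.mem_range] at hx hx'; exact h x hx hx'.1 hx'.2)]
  rw [Finset.sum_insert (by simp; omega), Finset.sum_singleton]

lemma sum_three {g : ℕ → ℝ} {n a b c : ℕ} (hab : a < b) (hbc : b < c) (hc : c < n)
    (h : ∀ k < n, k ≠ a → k ≠ b → k ≠ c → g k = 0) :
    ∑ k ∈ Finset.range n, g k = g a + g b + g c := by
  rw [← Finset.sum_subset (s₁ := ({a, b, c} : Finset ℕ))
      (by intro x hx; simp at hx; rcases hx with h | h | h <;> simp [Finset.mem_range] <;> omega)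
      (by intro x hx hx'; simp [Finset.mem_range] at hx hx'
          exact h x hx hx'.1 hx'.2.1 hx'.2.2)]
  rw [Finset.sum_insert (by simp; omega), Finset.sum_insert (by simp; omega),
    Finset.sum_singleton, add_assoc]

set_option maxHeartbeats 2000000 in
/-- Rank-2 decomposition of the clamped-clamped beam matrix: `A = T² + U Uᵗ`. -/
theorem A_CC_eq_Tsq_add_UUt (n : ℕ) (hn : 5 ≤ n) :
    A_CC n = Tmat n ^ 2 + Umat n * (Umat n)ᵀ := by
  ext i j
  have hT2 : (Tmat n ^ 2) i j = ∑ k ∈ Finset.range n, tN (i : ℕ) k * tN k (j : ℕ) := by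
    rw [pow_two, Matrix.mul_apply]
    exact Fin.sum_univ_eq_sum_range (fun m => tN (i : ℕ) m * tN m (j : ℕ)) n
  have hU : (Umat n * (Umat n)ᵀ) i j =
      (if (i : ℕ) = 0 ∧ (j : ℕ) = 0 then 2 else 0) +
      (if (i : ℕ) = n - 1 ∧ (j : ℕ) = n - 1 then 2 else 0) := by
    rw [Matrix.mul_apply, Fin.sum_univ_two]
    simp only [Umat, Matrix.transpose_apply, Matrix.of_apply]
    norm_num
    split_ifs <;> simp_all <;> rw [← Real.sqrt_mul_self (by norm_num : (0:ℝ) ≤ 2)] <;> norm_num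
  rw [Matrix.add_apply, hT2, hU]
  have hi : (i : ℕ) < n := i.isLt
  have hj : (j : ℕ) < n := j.isLt
  by_cases hi0 : (i : ℕ) = 0
  · rw [sum_two (a := 0) (b := 1) (by norm_num) (by omega)
      (by intro k hk h0 h1
          have : tN (i : ℕ) k = 0 := by unfold tN; rw [if_neg (by omega), if_neg (by omega)]
          rw [this, zero_mul])]
    rw [show tN (i : ℕ) 0 = 2 from by unfold tN; rw [if_pos (by omega)],
        show tN (i : ℕ) 1 = -1 from by unfold tN; rw [if_neg (by omega), if_pos (by omega)]]
    simp only [A_CC, tN, Matrix.of_apply]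
    split_ifs <;> (first | omega | (norm_num at * <;> omega) | norm_num)
  · by_cases hin : (i : ℕ) = n - 1
    · rw [sum_two (a := n - 2) (b := n - 1) (by omega) (by omega)
        (by intro k hk h0 h1
            have : tN (i : ℕ) k = 0 := by unfold tN; rw [if_neg (by omega), if_neg (by omega)]
            rw [this, zero_mul])]
      rw [show tN (i : ℕ) (n - 2) = -1 from by
            unfold tN; rw [if_neg (by omega), if_pos (by omega)],
          show tN (i : ℕ) (n - 1) = 2 from by unfold tN; rw [if_pos (by omega)]]
      simp only [A_CC, tN, Matrix.of_apply]
      split_ifs <;> (first | omega | (norm_num at * <;> omega) | norm_num)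
    · rw [sum_three (a := (i : ℕ) - 1) (b := (i : ℕ)) (c := (i : ℕ) + 1)
        (by omega) (by omega) (by omega)
        (by intro k hk h0 h1 h2
            have : tN (i : ℕ) k = 0 := by unfold tN; rw [if_neg (by omega), if_neg (by omega)]
            rw [this, zero_mul])]
      rw [show tN (i : ℕ) ((i : ℕ) - 1) = -1 from by
            unfold tN; rw [if_neg (by omega), if_pos (by omega)],
          show tN (i : ℕ) ((i : ℕ)) = 2 from by unfold tN; rw [if_pos rfl],
          show tN (i : ℕ) ((i : ℕ) + 1) = -1 from by
            unfold tN; rw [if_neg (by omega), if_pos (by omega)]]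
      simp only [A_CC, tN, Matrix.of_apply]
      split_ifs <;> (first | omega | (norm_num at * <;> omega) | norm_num)
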